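/- If a multistage problem min_x ρ₂(ρ₃(…ρ_T(F(x)))) with a decomposable risk measure ϱ = ρ₂∘⋯∘ρ_T has a unique optimal policy, and each ρ_t is monotone and translation equivariant, then this optimal policy is time consistent (its tail is optimal for every conditional tail problem). Simplified two-stage version: let ρ : Z₂ → ℝ be monotone, and let V(x₂)(ω) denote the cost of second-stage decision x₂ at ω. If x̄ = (x̄₁, x̄₂(·)) is the unique minimizer of ρ(f₁(x₁) + f₂(x₂(·),·)) over feasible policies, then for a.e. ω, x̄₂(ω) minimizes f₂(x₂,ω) over the feasible set X₂(x̄₁,ω). -/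

import Mathlib

open MeasureTheory

/-- simplified two-stage version: if ρ is monotone and the feasible
policy (x̄₁, x̄₂(·)) is the *unique* (up to a.e. equality) minimizer of
ρ(f₁(x₁) + f₂(x₂(·),·)), then it is time consistent: for a.e. ω the decision x̄₂(ω)
minimizes f₂(·,ω) over the feasible set X₂(x̄₁,ω). -/
theorem stmt12 {Ω X E : Type*} [MeasurableSpace Ω] (P : Measure Ω)
    [IsProbabilityMeasure P]
    (ρ : (Ω → ℝ) → ℝ)
    (hmono : ∀ V W : Ω → ℝ, (∀ᵐ ω ∂P, V ω ≤ W ω) → ρ V ≤ ρ W)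
    (X₁ : Set X) (X₂ : X → Ω → Set E) (f₁ : X → ℝ) (f₂ : E → Ω → ℝ)
    (xb₁ : X) (xb₂ : Ω → E)
    (hfeas₁ : xb₁ ∈ X₁) (hfeas₂ : ∀ᵐ ω ∂P, xb₂ ω ∈ X₂ xb₁ ω)
    (hopt : ∀ x₁ ∈ X₁, ∀ x₂ : Ω → E, (∀ᵐ ω ∂P, x₂ ω ∈ X₂ x₁ ω) →
      ρ (fun ω => f₁ xb₁ + f₂ (xb₂ ω) ω) ≤ ρ (fun ω => f₁ x₁ + f₂ (x₂ ω) ω))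
    (huniq : ∀ x₁ ∈ X₁, ∀ x₂ : Ω → E, (∀ᵐ ω ∂P, x₂ ω ∈ X₂ x₁ ω) →
      ρ (fun ω => f₁ x₁ + f₂ (x₂ ω) ω) = ρ (fun ω => f₁ xb₁ + f₂ (xb₂ ω) ω) →
      x₁ = xb₁ ∧ (∀ᵐ ω ∂P, x₂ ω = xb₂ ω)) :
    ∀ᵐ ω ∂P, ∀ y ∈ X₂ xb₁ ω, f₂ (xb₂ ω) ω ≤ f₂ y ω := by
  classical
  -- improved second-stage policy
  set x₂' : Ω → E := fun ω =>
    if h : ∃ y ∈ X₂ xb₁ ω, f₂ y ω < f₂ (xb₂ ω) ω then h.choose else xb₂ ω with hx₂'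
  have hle : ∀ ω, f₂ (x₂' ω) ω ≤ f₂ (xb₂ ω) ω := by
    intro ω
    by_cases h : ∃ y ∈ X₂ xb₁ ω, f₂ y ω < f₂ (xb₂ ω) ω
    · simp only [hx₂', dif_pos h]
      exact le_of_lt h.choose_spec.2
    · simp [hx₂', dif_neg h]
  have hfeas' : ∀ᵐ ω ∂P, x₂' ω ∈ X₂ xb₁ ω := by
    filter_upwards [hfeas₂] with ω hω
    by_cases h : ∃ y ∈ X₂ xb₁ ω, f₂ y ω < f₂ (xb₂ ω) ω
    · simp only [hx₂', dif_pos h]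
      exact h.choose_spec.1
    · simpa [hx₂', dif_neg h] using hω
  have h1 : ρ (fun ω => f₁ xb₁ + f₂ (x₂' ω) ω) ≤ ρ (fun ω => f₁ xb₁ + f₂ (xb₂ ω) ω) := by
    apply hmono
    filter_upwards with ω
    exact add_le_add le_rfl (hle ω)
  have h2 := hopt xb₁ hfeas₁ x₂' hfeas'
  have heq : ρ (fun ω => f₁ xb₁ + f₂ (x₂' ω) ω) = ρ (fun ω => f₁ xb₁ + f₂ (xb₂ ω) ω) :=
    le_antisymm h1 h2
  have hae := (huniq xb₁ hfeas₁ x₂' hfeas' heq).2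
  filter_upwards [hae] with ω hω y hy
  by_contra hlt
  push_neg at hlt
  have h : ∃ y ∈ X₂ xb₁ ω, f₂ y ω < f₂ (xb₂ ω) ω := ⟨y, hy, hlt⟩
  have : f₂ (x₂' ω) ω < f₂ (xb₂ ω) ω := by
    simp only [hx₂', dif_pos h]
    exact h.choose_spec.2
  rw [hω] at this
  exact lt_irrefl _ this
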